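/- arXiv:cs/0403040 — 2 statements merged into one kernel-verified Lean document; each statement's English description precedes it below -/
import Mathlib

section
/- Let M' be the Markov transition relation on the set 𝒜' of simply connected acyclic digraphs on vertex set V = {1,…,N}, N ≥ 2, where a transition from X to Y exists iff either Y = X \ {(i,j)} for some non-bridge arc (i,j) of X, or Y = (X \ {(i,j)}) ∪ {(j,i)} for some bridge arc (i,j) of X, or Y = X ∪ {(i,j)} for some non-arc (i,j) with Y acyclic. Then for any two G, H ∈ 𝒜' there is a sequence of transitions from G to H staying within 𝒜'. -/
/-- A digraph given by its arc set is acyclic if no vertex lies on a directed cycle. -/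
def DAcyclic {V : Type*} (A : Finset (V × V)) : Prop :=
  ∀ a : V, ¬ Relation.TransGen (fun x y => (x, y) ∈ A) a a

/-- The underlying undirected simple graph of an arc set. -/
def toGraph {V : Type*} [DecidableEq V] (A : Finset (V × V)) : SimpleGraph V where
  Adj a b := a ≠ b ∧ ((a, b) ∈ A ∨ (b, a) ∈ A)
  symm := ⟨fun _ _ h => ⟨h.1.symm, h.2.symm⟩⟩
  loopless := ⟨fun _ h => h.1 rfl⟩

instance {V : Type*} [DecidableEq V] (A : Finset (V × V)) :
    DecidableRel (toGraph A).Adj :=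
  fun a b => inferInstanceAs (Decidable (a ≠ b ∧ ((a, b) ∈ A ∨ (b, a) ∈ A)))

/-- One transition of the Markov chain `M'`: delete a non-bridge arc, reverse a
bridge arc, or add an arc so that the result is acyclic. -/
def Move {V : Type*} [DecidableEq V] (X Y : Finset (V × V)) : Prop :=
  (∃ i j : V, (i, j) ∈ X ∧ ¬(toGraph X).IsBridge s(i, j) ∧ Y = X.erase (i, j)) ∨
  (∃ i j : V, (i, j) ∈ X ∧ (toGraph X).IsBridge s(i, j) ∧
    Y = insert (j, i) (X.erase (i, j))) ∨
  (∃ i j : V, (i, j) ∉ X ∧ Y = insert (i, j) X ∧ DAcyclic Y)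

set_option linter.unusedSectionVars false
set_option linter.unusedVariables false

section helpers
variable {V : Type*} [DecidableEq V]

lemma toGraph_adj (A : Finset (V × V)) (a b : V) :
    (toGraph A).Adj a b ↔ a ≠ b ∧ ((a, b) ∈ A ∨ (b, a) ∈ A) := Iff.rfl

lemma toGraph_mono {A B : Finset (V × V)} (h : A ⊆ B) : toGraph A ≤ toGraph B :=
  fun _ _ hab => ⟨hab.1, hab.2.imp (@h _) (@h _)⟩

lemma DAcyclic.mono {A B : Finset (V × V)} (h : A ⊆ B) (hB : DAcyclic B) : DAcyclic A :=
  fun a ha => hB a (Relation.TransGen.mono (fun _ _ hx => h hx) _ _ ha)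

lemma DAcyclic.ne {A : Finset (V × V)} (hA : DAcyclic A) {i j : V} (h : (i, j) ∈ A) :
    i ≠ j := by
  rintro rfl; exact hA i (Relation.TransGen.single h)

lemma DAcyclic.not_rev {A : Finset (V × V)} (hA : DAcyclic A) {i j : V} (h : (i, j) ∈ A) :
    (j, i) ∉ A := fun h' =>
  hA i (Relation.TransGen.tail (Relation.TransGen.single h) h')

lemma toGraph_erase {A : Finset (V × V)} {i j : V} (hrev : (j, i) ∉ A) :
    toGraph (A.erase (i, j)) = (toGraph A) \ SimpleGraph.fromEdgeSet {s(i, j)} := by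
  ext a b
  simp only [toGraph_adj, Finset.mem_erase, SimpleGraph.sdiff_adj,
    SimpleGraph.fromEdgeSet_adj, Set.mem_singleton_iff, Sym2.eq_iff, Prod.mk.injEq, ne_eq]
  constructor
  · rintro ⟨hne, h⟩
    refine ⟨⟨hne, h.imp (fun h => h.2) (fun h => h.2)⟩, ?_⟩
    rintro ⟨(⟨rfl, rfl⟩ | ⟨rfl, rfl⟩), -⟩
    · rcases h with ⟨h1, -⟩ | ⟨-, h2⟩
      · exact h1 ⟨rfl, rfl⟩
      · exact hrev h2
    · rcases h with ⟨-, h1⟩ | ⟨h2, -⟩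
      · exact hrev h1
      · exact h2 ⟨rfl, rfl⟩
  · rintro ⟨⟨hne, h⟩, hs⟩
    refine ⟨hne, h.imp (fun h' => ⟨?_, h'⟩) (fun h' => ⟨?_, h'⟩)⟩
    · rintro ⟨rfl, rfl⟩; exact hs ⟨Or.inl ⟨rfl, rfl⟩, hne⟩
    · rintro ⟨rfl, rfl⟩; exact hs ⟨Or.inr ⟨rfl, rfl⟩, hne⟩

lemma toGraph_reverse {A : Finset (V × V)} {i j : V} (hij : (i, j) ∈ A)
    (hrev : (j, i) ∉ A) : toGraph (insert (j, i) (A.erase (i, j))) = toGraph A := by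
  ext a b
  simp only [toGraph_adj, Finset.mem_insert, Finset.mem_erase, Prod.mk.injEq, ne_eq]
  constructor
  · rintro ⟨hne, (⟨rfl, rfl⟩ | ⟨-, h⟩) | (⟨rfl, rfl⟩ | ⟨-, h⟩)⟩
    · exact ⟨hne, Or.inr hij⟩
    · exact ⟨hne, Or.inl h⟩
    · exact ⟨hne, Or.inl hij⟩
    · exact ⟨hne, Or.inr h⟩
  · rintro ⟨hne, h | h⟩
    · by_cases hab : (a, b) = (i, j)
      · obtain ⟨rfl, rfl⟩ := Prod.mk.injEq .. ▸ hab
        exact ⟨hne, Or.inr (Or.inl ⟨rfl, rfl⟩)⟩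
      · exact ⟨hne, Or.inl (Or.inr ⟨fun h' => hab (by simp [h'.1, h'.2]), h⟩)⟩
    · by_cases hab : (b, a) = (i, j)
      · obtain ⟨rfl, rfl⟩ := Prod.mk.injEq .. ▸ hab
        exact ⟨hne, Or.inl (Or.inl ⟨rfl, rfl⟩)⟩
      · exact ⟨hne, Or.inr (Or.inr ⟨fun h' => hab (by simp [h'.1, h'.2]), h⟩)⟩

end helpers

section sym
variable {V : Type*} [DecidableEq V]

def Good (X : Finset (V × V)) : Prop :=
  (toGraph X).Connected ∧ DAcyclic X

lemma move_symm {X Y : Finset (V × V)} (hX : Good X) (hY : Good Y) (m : Move X Y) :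
    Move Y X := by
  rcases m with ⟨i, j, hij, hb, rfl⟩ | ⟨i, j, hij, hb, rfl⟩ | ⟨i, j, hij, rfl, hac⟩
  · exact Or.inr (Or.inr ⟨i, j, Finset.notMem_erase _ _,
      (Finset.insert_erase hij).symm, hX.2⟩)
  · have hne := hX.2.ne hij
    have hrev := hX.2.not_rev hij
    refine Or.inr (Or.inl ⟨j, i, Finset.mem_insert_self _ _, ?_, ?_⟩)
    · rw [toGraph_reverse hij hrev, Sym2.eq_swap]; exact hb
    · rw [Finset.erase_insert (by simp [Finset.mem_erase, hrev]), Finset.insert_erase hij]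
  · have hne : i ≠ j := hac.ne (Finset.mem_insert_self _ _)
    have hrev : (j, i) ∉ insert (i, j) X := hac.not_rev (Finset.mem_insert_self _ _)
    refine Or.inl ⟨i, j, Finset.mem_insert_self _ _, ?_, by rw [Finset.erase_insert hij]⟩
    rw [SimpleGraph.isBridge_iff]
    intro hnr
    apply hnr
    have : toGraph X = toGraph ((insert (i, j) X).erase (i, j)) := by
      rw [Finset.erase_insert hij]
    rw [toGraph_erase hrev] at this
    exact ((this ▸ hX.1.preconnected i j :
      (toGraph (insert (i, j) X) \ SimpleGraph.fromEdgeSet {s(i, j)}).Reachable i j))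

lemma reach_symm {X Y : Finset (V × V)}
    (h : Relation.ReflTransGen (fun A B => Move A B ∧ Good B) X Y) (hX : Good X) :
    Good Y ∧ Relation.ReflTransGen (fun A B => Move A B ∧ Good B) Y X := by
  induction h with
  | refl => exact ⟨hX, .refl⟩
  | tail _ hbc ih =>
    exact ⟨hbc.2, .head ⟨move_symm ih.1 hbc.2 hbc.1, ih.1⟩ ih.2⟩

end sym

section topo
open Classical in
theorem topoEquiv {N : ℕ} (hN : 1 ≤ N) (X : Finset (Fin N × Fin N))
    (hX : DAcyclic X) : ∃ f : Fin N ≃ Fin N, ∀ a b : Fin N, (a, b) ∈ X → f a < f b := by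
  classical
  set r : Fin N → Fin N → Prop :=
    fun a b => a = b ∨ Relation.TransGen (fun x y => (x, y) ∈ X) a b with hr
  haveI : IsPartialOrder (Fin N) r :=
    { refl := fun a => Or.inl rfl
      trans := by
        intro a b c hab hbc
        rcases hab with rfl | h
        · exact hbc
        rcases hbc with rfl | h'
        · exact Or.inr h
        · exact Or.inr (h.trans h')
      antisymm := by
        intro a b hab hba
        rcases hab with rfl | h
        · rfl
        rcases hba with rfl | h'
        · rfl
        · exact absurd (h.trans h') (hX a) }
  obtain ⟨s, hs, hrs⟩ := extend_partialOrder r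
  haveI := hs
  set F : Fin N → ℕ := fun a => (Finset.univ.filter fun c => s c a ∧ c ≠ a).card with hF
  have hFlt : ∀ a b : Fin N, s a b → a ≠ b → F a < F b := by
    intro a b hab hne
    apply Finset.card_lt_card
    constructor
    · intro c hc
      simp only [Finset.mem_filter, Finset.mem_univ, true_and] at hc ⊢
      refine ⟨hs.trans _ _ _ hc.1 hab, ?_⟩
      rintro rfl
      exact hne (hs.antisymm _ _ hab hc.1)
    · intro hsub
      have : a ∈ Finset.univ.filter fun c => s c b ∧ c ≠ b := by
        simp [hab, hne]
      have := hsub this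
      simp at this
  have hFN : ∀ a : Fin N, F a < N := by
    intro a
    have : (Finset.univ.filter fun c => s c a ∧ c ≠ a) ⊆ Finset.univ.erase a := by
      intro c hc
      simp only [Finset.mem_filter] at hc
      simp [hc.2.2]
    calc F a ≤ (Finset.univ.erase a).card := Finset.card_le_card this
      _ < N := by
        rw [Finset.card_erase_of_mem (Finset.mem_univ a), Finset.card_univ, Fintype.card_fin]
        omega
  set g : Fin N → Fin N := fun a => ⟨F a, hFN a⟩ with hg
  have hginj : Function.Injective g := by
    intro a b hab
    by_contra hne
    rcases hs.total a b with h | h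
    · exact absurd (congrArg Fin.val hab) (Nat.ne_of_lt (hFlt a b h hne))
    · exact absurd (congrArg Fin.val hab).symm (Nat.ne_of_lt (hFlt b a h (Ne.symm hne)))
  refine ⟨Equiv.ofBijective g ((Finite.injective_iff_bijective).mp hginj), ?_⟩
  intro a b hab
  have hne : a ≠ b := by rintro rfl; exact hX a (Relation.TransGen.single hab)
  have : s a b := hrs a b (Or.inr (Relation.TransGen.single hab))
  simpa [Equiv.ofBijective, g, Fin.lt_def] using hFlt a b this hne
end topo

abbrev Reach {V : Type*} [DecidableEq V] (X Y : Finset (V × V)) : Prop :=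
  Relation.ReflTransGen (fun A B => Move A B ∧ Good B) X Y



section tour
variable {N : ℕ}

def tour (f : Fin N ≃ Fin N) : Finset (Fin N × Fin N) :=
  Finset.univ.filter fun p => f p.1 < f p.2

lemma mem_tour {f : Fin N ≃ Fin N} {a b : Fin N} : (a, b) ∈ tour f ↔ f a < f b := by
  simp [tour]

lemma dacyclic_tour (f : Fin N ≃ Fin N) : DAcyclic (tour f) := by
  intro a ha
  have key : ∀ x y : Fin N, Relation.TransGen (fun x y => (x, y) ∈ tour f) x y →
      f x < f y := by
    intro x y h
    induction h with
    | single h => exact mem_tour.mp h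
    | tail _ h ih => exact ih.trans (mem_tour.mp h)
  exact lt_irrefl _ (key a a ha)

lemma good_tour (hN : 1 ≤ N) (f : Fin N ≃ Fin N) : Good (tour f) := by
  haveI : Nonempty (Fin N) := ⟨⟨0, by omega⟩⟩
  refine ⟨⟨fun a b => ?_⟩, dacyclic_tour f⟩
  rcases eq_or_ne a b with rfl | hne
  · exact SimpleGraph.Reachable.refl _
  · refine SimpleGraph.Adj.reachable ?_
    rw [toGraph_adj]
    refine ⟨hne, ?_⟩
    rcases lt_or_gt_of_ne (fun h => hne (f.injective h)) with h | h
    · exact Or.inl (mem_tour.mpr h)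
    · exact Or.inr (mem_tour.mpr h)

lemma fill (hN : 1 ≤ N) (f : Fin N ≃ Fin N) :
    ∀ (n : ℕ) (Z : Finset (Fin N × Fin N)), ((tour f).card - Z.card) = n →
      Z ⊆ tour f → Good Z → Reach Z (tour f) := by
  intro n
  induction n with
  | zero =>
    intro Z hcard hsub _
    have hle := Finset.card_le_card hsub
    have : Z = tour f := Finset.eq_of_subset_of_card_le hsub (by omega)
    rw [this]
  | succ m ih =>
    intro Z hcard hsub hZ
    have hne : (tour f \ Z).Nonempty := by
      rw [← Finset.card_pos, Finset.card_sdiff_of_subset hsub]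
      omega
    obtain ⟨p, hp⟩ := hne
    rw [Finset.mem_sdiff] at hp
    have hins : insert p Z ⊆ tour f := Finset.insert_subset hp.1 hsub
    have hgood : Good (insert p Z) := by
      refine ⟨hZ.1.mono (toGraph_mono (Finset.subset_insert p Z)), ?_⟩
      exact DAcyclic.mono hins (dacyclic_tour f)
    refine Relation.ReflTransGen.head ⟨?_, hgood⟩ (ih (insert p Z) ?_ hins hgood)
    · exact Or.inr (Or.inr ⟨p.1, p.2, hp.2, rfl, hgood.2⟩)
    · rw [Finset.card_insert_of_notMem hp.2]
      omega

end tour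

section sort
variable {N : ℕ}

def invSet (f : Fin N ≃ Fin N) : Finset (Fin N × Fin N) :=
  Finset.univ.filter fun p => p.1 < p.2 ∧ f p.2 < f p.1

lemma mem_invSet {f : Fin N ≃ Fin N} {a b : Fin N} :
    (a, b) ∈ invSet f ↔ a < b ∧ f b < f a := by simp [invSet]

lemma noAdjInv (f : Fin N ≃ Fin N)
    (h : ∀ (k : ℕ) (h1 : k + 1 < N), ¬ f.symm ⟨k + 1, h1⟩ < f.symm ⟨k, by omega⟩) :
    f = Equiv.refl (Fin N) := by
  rcases Nat.eq_zero_or_pos N with rfl | hNpos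
  · ext x; exact absurd x.2 (by omega)
  obtain ⟨M, rfl⟩ : ∃ M, N = M + 1 := ⟨N - 1, by omega⟩
  have hstep : ∀ (k : ℕ) (hk : k + 1 < M + 1),
      f.symm ⟨k, by omega⟩ < f.symm ⟨k + 1, hk⟩ := by
    intro k hk
    refine lt_of_le_of_ne (not_lt.mp (h k hk)) ?_
    intro e
    have := f.symm.injective e
    simp only [Fin.mk.injEq] at this
    omega
  have hsm : StrictMono f.symm := by
    rw [Fin.strictMono_iff_lt_succ]
    intro i
    exact hstep i.1 i.succ.isLt
  have hrange : Set.range f.symm = Set.range (id : Fin (M+1) → Fin (M+1)) := by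
    rw [Equiv.range_eq_univ, Set.range_id]
  haveI : WellFoundedLT (Fin (M+1)) := Finite.to_wellFoundedLT
  have hid : (f.symm : Fin (M+1) → Fin (M+1)) = id := (hsm.range_inj strictMono_id).1 hrange
  ext x
  have := congrFun hid (f x)
  have h2 : x = f x := by simpa using this
  rw [← h2]
  rfl

lemma sort_aux (hN : 1 ≤ N) :
    ∀ (n : ℕ) (f : Fin N ≃ Fin N), (invSet f).card ≤ n →
      Reach (tour f) (tour (Equiv.refl (Fin N))) := by
  intro n
  induction n with
  | zero =>
    intro f hf
    have hempty : invSet f = ∅ := Finset.card_eq_zero.mp (by omega)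
    have : f = Equiv.refl (Fin N) := by
      apply noAdjInv
      intro k h1 hlt
      have : (f.symm ⟨k + 1, h1⟩, f.symm ⟨k, by omega⟩) ∈ invSet f := by
        rw [mem_invSet]
        refine ⟨hlt, ?_⟩
        simp only [Equiv.apply_symm_apply, Fin.lt_def]
        omega
      rw [hempty] at this
      exact absurd this (Finset.notMem_empty _)
    rw [this]
  | succ m ih =>
    intro f hf
    by_cases hP : ∃ (k : ℕ) (h1 : k + 1 < N), f.symm ⟨k + 1, h1⟩ < f.symm ⟨k, by omega⟩
    case neg =>
      push_neg at hP
      rw [noAdjInv f (fun k h1 => not_lt.mpr (hP k h1))]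
    obtain ⟨k, h1, hlt⟩ := hP
    set kk : Fin N := ⟨k, by omega⟩ with hkk
    set kk1 : Fin N := ⟨k + 1, h1⟩ with hkk1
    set u : Fin N := f.symm kk1 with hu
    set v : Fin N := f.symm kk with hv
    have huv : (u : ℕ) < (v : ℕ) := hlt
    set g : Fin N ≃ Fin N := f.trans (Equiv.swap kk kk1) with hg
    have gval : ∀ x : Fin N, (g x : ℕ) =
        if (f x : ℕ) = k then k + 1 else if (f x : ℕ) = k + 1 then k else (f x : ℕ) := by
      intro x
      rcases eq_or_ne (f x) kk with hx | hx
      · rw [if_pos (by rw [hx])]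
        simp [hg, Equiv.trans_apply, hx, Equiv.swap_apply_left, hkk1]
      rcases eq_or_ne (f x) kk1 with hx1 | hx1
      · rw [if_neg (fun h => hx (Fin.ext (by simpa [hkk] using h))),
          if_pos (by rw [hx1])]
        simp [hg, Equiv.trans_apply, hx1, Equiv.swap_apply_right, hkk]
      · rw [if_neg (fun h => hx (Fin.ext (by simpa [hkk] using h))),
          if_neg (fun h => hx1 (Fin.ext (by simpa [hkk1] using h)))]
        simp [hg, Equiv.trans_apply, Equiv.swap_apply_of_ne_of_ne hx hx1]
    have hxu : ∀ x : Fin N, (f x : ℕ) = k + 1 ↔ (x : ℕ) = (u : ℕ) := by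
      intro x
      constructor
      · intro h
        have : f x = kk1 := Fin.ext (by simpa [hkk1] using h)
        rw [hu, ← this, Equiv.symm_apply_apply]
      · intro h
        have : x = u := Fin.ext h
        rw [this, hu, Equiv.apply_symm_apply, hkk1]
    have hxv : ∀ x : Fin N, (f x : ℕ) = k ↔ (x : ℕ) = (v : ℕ) := by
      intro x
      constructor
      · intro h
        have : f x = kk := Fin.ext (by simpa [hkk] using h)
        rw [hv, ← this, Equiv.symm_apply_apply]
      · intro h
        have : x = v := Fin.ext h
        rw [this, hv, Equiv.apply_symm_apply, hkk]
    have key1 : tour g = insert (u, v) ((tour f).erase (v, u)) := by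
      ext ⟨a, b⟩
      simp only [mem_tour, Finset.mem_insert, Finset.mem_erase, ne_eq, Prod.mk.injEq,
        Fin.lt_def, Fin.ext_iff]
      rw [gval a, gval b, ← hxu a, ← hxv b, ← hxv a, ← hxu b]
      split_ifs <;> omega
    have hvuf : (v, u) ∈ tour f := by
      rw [mem_tour, Fin.lt_def]
      have h1 : (f v : ℕ) = k := (hxv v).mpr rfl
      have h2 : (f u : ℕ) = k + 1 := (hxu u).mpr rfl
      omega
    have huvf : (u, v) ∉ tour f := by
      rw [mem_tour, Fin.lt_def]
      have h1 : (f v : ℕ) = k := (hxv v).mpr rfl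
      have h2 : (f u : ℕ) = k + 1 := (hxu u).mpr rfl
      omega
    have key2 : (invSet g).card < (invSet f).card := by
      have hmem : (u, v) ∈ invSet f := by
        rw [mem_invSet]
        have h1 : (f v : ℕ) = k := (hxv v).mpr rfl
        have h2 : (f u : ℕ) = k + 1 := (hxu u).mpr rfl
        exact ⟨Fin.lt_def.mpr huv, Fin.lt_def.mpr (by omega)⟩
      have hsub : invSet g ⊆ (invSet f).erase (u, v) := by
        rintro ⟨a, b⟩ hab
        rw [mem_invSet] at hab
        obtain ⟨h2, h3⟩ := hab
        rw [Fin.lt_def] at h3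
        rw [gval a, gval b] at h3
        rw [Fin.lt_def] at h2
        simp only [Finset.mem_erase, mem_invSet, ne_eq, Prod.mk.injEq, Fin.lt_def,
          Fin.ext_iff]
        rw [← hxu a, ← hxv b]
        have e1 := hxu a; have e2 := hxv a; have e3 := hxu b; have e4 := hxv b
        constructor
        · split_ifs at h3 <;> omega
        · refine ⟨h2, ?_⟩
          split_ifs at h3 <;> omega
      calc (invSet g).card ≤ ((invSet f).erase (u, v)).card := Finset.card_le_card hsub
        _ < (invSet f).card := Finset.card_erase_lt_of_mem hmem
    have good_f : Good (tour f) := good_tour hN f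
    have good_g : Good (tour g) := good_tour hN g
    have hreach1 : Reach (tour f) (tour g) := by
      by_cases hb : (toGraph (tour f)).IsBridge s(v, u)
      · exact Relation.ReflTransGen.single
          ⟨Or.inr (Or.inl ⟨v, u, hvuf, hb, key1⟩), good_g⟩
      · set Z : Finset (Fin N × Fin N) := (tour f).erase (v, u) with hZ
        have hZsub : Z ⊆ tour f := Finset.erase_subset _ _
        have hiso : toGraph Z = toGraph (tour f) \ SimpleGraph.fromEdgeSet {s(v, u)} :=
          toGraph_erase huvf
        have hvu_ne : v ≠ u := fun h => by rw [h] at huv; omega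
        have hbimp := hb
        rw [SimpleGraph.isBridge_iff] at hbimp
        push_neg at hbimp
        have hadj : (toGraph (tour f)).Adj v u :=
          (toGraph_adj _ _ _).mpr ⟨hvu_ne, Or.inl hvuf⟩
        have hreach_vu : (toGraph (tour f) \ SimpleGraph.fromEdgeSet {s(v, u)}).Reachable v u :=
          hbimp
        have hgoodZ : Good Z := by
          constructor
          · haveI : Nonempty (Fin N) := ⟨⟨0, by omega⟩⟩
            refine ⟨fun a b => ?_⟩
            rcases eq_or_ne a b with rfl | hab
            · exact SimpleGraph.Reachable.refl _
            by_cases hsab : s(a, b) = s(v, u)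
            · rw [Sym2.eq_iff] at hsab
              rcases hsab with ⟨rfl, rfl⟩ | ⟨rfl, rfl⟩
              · rw [hiso]; exact hreach_vu
              · rw [hiso]; exact hreach_vu.symm
            · refine SimpleGraph.Adj.reachable ?_
              rw [hiso, SimpleGraph.sdiff_adj]
              constructor
              · refine (toGraph_adj _ _ _).mpr ⟨hab, ?_⟩
                rcases lt_or_gt_of_ne (fun h => hab (f.injective h)) with h | h
                · exact Or.inl (mem_tour.mpr h)
                · exact Or.inr (mem_tour.mpr h)
              · rw [SimpleGraph.fromEdgeSet_adj]
                rintro ⟨h1, -⟩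
                exact hsab h1
          · exact DAcyclic.mono hZsub (dacyclic_tour f)
        have step1 : Move (tour f) Z := Or.inl ⟨v, u, hvuf, hb, rfl⟩
        have step2 : Move Z (tour g) :=
          Or.inr (Or.inr ⟨u, v, fun h => huvf (hZsub h), key1, good_g.2⟩)
        exact Relation.ReflTransGen.head ⟨step1, hgoodZ⟩
          (Relation.ReflTransGen.single ⟨step2, good_g⟩)
    exact hreach1.trans (ih g (by omega))

end sort


/-- The Markov chain `M'` on simply connected acyclic digraphs is irreducible. -/
theorem stmt_10 (N : ℕ) (hN : 2 ≤ N) (G H : Finset (Fin N × Fin N))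
    (hG : (toGraph G).Connected ∧ DAcyclic G)
    (hH : (toGraph H).Connected ∧ DAcyclic H) :
    Relation.ReflTransGen
      (fun X Y => Move X Y ∧ (toGraph Y).Connected ∧ DAcyclic Y) G H := by
  have h1 : 1 ≤ N := by omega
  obtain ⟨fG, hfG⟩ := topoEquiv h1 G hG.2
  obtain ⟨fH, hfH⟩ := topoEquiv h1 H hH.2
  have hGsub : G ⊆ tour fG := by
    rintro ⟨a, b⟩ hp
    exact mem_tour.mpr (hfG a b hp)
  have hHsub : H ⊆ tour fH := by
    rintro ⟨a, b⟩ hp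
    exact mem_tour.mpr (hfH a b hp)
  have r1 : Reach G (tour fG) := fill h1 fG _ G rfl hGsub hG
  have r2 : Reach (tour fG) (tour (Equiv.refl (Fin N))) := sort_aux h1 _ fG le_rfl
  have r3 : Reach H (tour fH) := fill h1 fH _ H rfl hHsub hH
  have r4 : Reach (tour fH) (tour (Equiv.refl (Fin N))) := sort_aux h1 _ fH le_rfl
  have r5 : Reach (tour (Equiv.refl (Fin N))) H := (reach_symm (r3.trans r4) hH).2
  exact (r1.trans r2).trans r5
end

section
/- Let C be a dichain on V = {1,…,N}, N ≥ 3, with underlying path v_1,…,v_N, and suppose v_j = 1 for some j > 1. Then some arc between v_N and v_1 can be added to C preserving acyclicity, after which the arc corresponding to the edge {v_{j−1}, v_j} is not a bridge; deleting it yields a dichain whose underlying path starts at vertex 1. -/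
lemma dacyclic_mono {V : Type*} {A B : Finset (V × V)} (h : A ⊆ B) (hB : DAcyclic B) :
    DAcyclic A :=
  fun a ha => hB a (Relation.TransGen.mono (fun _ _ hxy => h hxy) _ _ ha)

lemma dacyclic_insert {V : Type*} [DecidableEq V] {A : Finset (V × V)} {x y : V}
    (hA : DAcyclic A) (hxy : x ≠ y)
    (hyx : ¬ Relation.TransGen (fun a b => (a, b) ∈ A) y x) :
    DAcyclic (insert (x, y) A) := by
  intro a ha
  have key : ∀ u w : V, Relation.TransGen (fun p q => (p, q) ∈ insert (x, y) A) u w →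
      Relation.TransGen (fun p q => (p, q) ∈ A) u w ∨
      (Relation.ReflTransGen (fun p q => (p, q) ∈ A) u x ∧
       Relation.ReflTransGen (fun p q => (p, q) ∈ A) y w) := by
    intro u w h
    induction h with
    | single hs =>
      rcases Finset.mem_insert.mp hs with h' | h'
      · injection h' with h1 h2
        subst h1; subst h2
        exact Or.inr ⟨.refl, .refl⟩
      · exact Or.inl (.single h')
    | tail hb hs ih =>
      rcases Finset.mem_insert.mp hs with h' | h'
      · have h1 : _ = x := congrArg Prod.fst h'
        have h2 : _ = y := congrArg Prod.snd h'
        rcases ih with h | ⟨p, q⟩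
        · exact Or.inr ⟨h1 ▸ h.to_reflTransGen, h2 ▸ Relation.ReflTransGen.refl⟩
        · exfalso
          have hq : Relation.ReflTransGen (fun p q => (p, q) ∈ A) y x := h1 ▸ q
          rcases hq.cases_head with h'' | ⟨c, hc, hcb⟩
          · exact hxy h''.symm
          · exact hyx (Relation.TransGen.head' hc hcb)
      · rcases ih with h | ⟨p, q⟩
        · exact Or.inl (h.tail h')
        · exact Or.inr ⟨p, q.tail h'⟩
  rcases key a a ha with h | ⟨h1, h2⟩
  · exact hA a h
  · have hyx' : Relation.ReflTransGen (fun p q => (p, q) ∈ A) y x := h2.trans h1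
    rcases hyx'.cases_head with h'' | ⟨c, hc, hcb⟩
    · exact hxy h''.symm
    · exact hyx (Relation.TransGen.head' hc hcb)

lemma chain_reach {α : Type*} {G : SimpleGraph α} (u : ℕ → α) :
    ∀ n, (∀ i, i < n → G.Adj (u i) (u (i + 1))) → G.Reachable (u 0) (u n)
  | 0, _ => .refl _
  | n + 1, h =>
    ((chain_reach u n fun i hi => h i (by omega)).trans (h n (by omega)).reachable)

/-- Turning the vertex `1` (here `0 : Fin N`) into the first vertex of a dichain:
adding an arc between the endpoints of the path and deleting the now non-bridge arc
entering `1` yields a dichain whose underlying path starts at `1`. -/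
theorem stmt_13 (N : ℕ) (hN : 3 ≤ N) (C : Finset (Fin N × Fin N))
    (hC : DAcyclic C) (v : Fin N ≃ Fin N)
    (hv : ∀ a b : Fin N, (toGraph C).Adj (v a) (v b) ↔
      (a.val + 1 = b.val ∨ b.val + 1 = a.val))
    (k : ℕ) (hk : k + 1 < N) (h1 : v ⟨k + 1, hk⟩ = (⟨0, by omega⟩ : Fin N)) :
    ∃ e : Fin N × Fin N,
      (e = (v ⟨N - 1, by omega⟩, v ⟨0, by omega⟩) ∨
        e = (v ⟨0, by omega⟩, v ⟨N - 1, by omega⟩)) ∧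
      e ∉ C ∧ DAcyclic (insert e C) ∧
      ∃ f ∈ C,
        (f = (v ⟨k, by omega⟩, v ⟨k + 1, hk⟩) ∨
          f = (v ⟨k + 1, hk⟩, v ⟨k, by omega⟩)) ∧
        ¬(toGraph (insert e C)).IsBridge s(f.1, f.2) ∧
        DAcyclic ((insert e C).erase f) ∧
        ∃ w : Fin N ≃ Fin N, w ⟨0, by omega⟩ = (⟨0, by omega⟩ : Fin N) ∧
          ∀ a b : Fin N, (toGraph ((insert e C).erase f)).Adj (w a) (w b) ↔
            (a.val + 1 = b.val ∨ b.val + 1 = a.val) := by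
  have p0 : 0 < N := by omega
  have pk : k < N := by omega
  have pN1 : N - 1 < N := by omega
  haveI : NeZero N := ⟨by omega⟩
  have hm : ∀ {i j : ℕ} {hi : i < N} {hj : j < N}, v ⟨i, hi⟩ = v ⟨j, hj⟩ → i = j :=
    fun h => congrArg Fin.val (v.injective h)
  have hm' : ∀ {x : Fin N} {j : ℕ} {hj : j < N}, v x = v ⟨j, hj⟩ → x.val = j :=
    fun h => congrArg Fin.val (v.injective h)
  -- every arc of C joins consecutive vertices of the path
  have hC' : ∀ p q : Fin N, (p, q) ∈ C → ∃ s : ℕ, ∃ hs : s + 1 < N,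
      (p = v ⟨s, by omega⟩ ∧ q = v ⟨s + 1, hs⟩) ∨
      (q = v ⟨s, by omega⟩ ∧ p = v ⟨s + 1, hs⟩) := by
    intro p q hpq
    have hne : p ≠ q := by rintro rfl; exact hC p (.single hpq)
    have hadj : (toGraph C).Adj (v (v.symm p)) (v (v.symm q)) := by
      rw [Equiv.apply_symm_apply, Equiv.apply_symm_apply]
      exact ⟨hne, Or.inl hpq⟩
    rcases (hv _ _).mp hadj with h | h
    · refine ⟨(v.symm p).val, by have := (v.symm q).isLt; omega, Or.inl ⟨?_, ?_⟩⟩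
      · exact (v.apply_symm_apply p).symm
      · rw [show (⟨(v.symm p).val + 1, by have := (v.symm q).isLt; omega⟩ : Fin N) = v.symm q
            from Fin.ext h]
        exact (v.apply_symm_apply q).symm
    · refine ⟨(v.symm q).val, by have := (v.symm p).isLt; omega, Or.inr ⟨?_, ?_⟩⟩
      · exact (v.apply_symm_apply q).symm
      · rw [show (⟨(v.symm q).val + 1, by have := (v.symm p).isLt; omega⟩ : Fin N) = v.symm p
            from Fin.ext h]
        exact (v.apply_symm_apply p).symm
  have hnd : ∀ p q : Fin N, (p, q) ∈ C → (q, p) ∉ C := by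
    intro p q h h'
    exact hC p (Relation.TransGen.tail (.single h) h')
  have hEx : ∀ s : ℕ, ∀ hs : s + 1 < N,
      (v ⟨s, by omega⟩, v ⟨s + 1, hs⟩) ∈ C ∨ (v ⟨s + 1, hs⟩, v ⟨s, by omega⟩) ∈ C := by
    intro s hs
    exact ((hv ⟨s, by omega⟩ ⟨s + 1, hs⟩).mpr (Or.inl rfl)).2
  -- choice of e
  obtain ⟨e, he, heAcyc⟩ :
      ∃ e : Fin N × Fin N,
        (e = (v ⟨N - 1, pN1⟩, v ⟨0, p0⟩) ∨ e = (v ⟨0, p0⟩, v ⟨N - 1, pN1⟩)) ∧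
        DAcyclic (insert e C) := by
    have hne : v ⟨0, p0⟩ ≠ v ⟨N - 1, pN1⟩ := by
      intro h; have := hm h; omega
    by_cases hP : Relation.TransGen (fun x y => (x, y) ∈ C) (v ⟨0, p0⟩) (v ⟨N - 1, pN1⟩)
    · refine ⟨(v ⟨0, p0⟩, v ⟨N - 1, pN1⟩), Or.inr rfl, dacyclic_insert hC hne ?_⟩
      intro h; exact hC _ (hP.trans h)
    · exact ⟨(v ⟨N - 1, pN1⟩, v ⟨0, p0⟩), Or.inl rfl, dacyclic_insert hC hne.symm hP⟩
  have heNotC : e ∉ C := by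
    intro hmem
    rcases he with he' | he' <;> rw [he'] at hmem <;>
      obtain ⟨s, hs, hss⟩ := hC' _ _ hmem <;> rcases hss with ⟨h1', h2'⟩ | ⟨h1', h2'⟩ <;>
      · have e1 := hm h1'
        have e2 := hm h2'
        omega
  -- choice of f
  obtain ⟨f, hf, hfC⟩ :
      ∃ f : Fin N × Fin N,
        (f = (v ⟨k, pk⟩, v ⟨k + 1, hk⟩) ∨ f = (v ⟨k + 1, hk⟩, v ⟨k, pk⟩)) ∧ f ∈ C := by
    rcases hEx k hk with h | h
    exacts [⟨_, Or.inl rfl, h⟩, ⟨_, Or.inr rfl, h⟩]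
  have hef : e ≠ f := fun h => heNotC (h ▸ hfC)
  have hpair_ne_e : (v (⟨k, pk⟩ : Fin N), v ⟨k + 1, hk⟩) ≠ e ∧
      (v ⟨k + 1, hk⟩, v (⟨k, pk⟩ : Fin N)) ≠ e := by
    constructor <;> intro h <;> rcases he with he' | he' <;> rw [he'] at h <;>
    · injection h with h1' h2'
      have e1 := hm h1'
      have e2 := hm h2'
      omega
  have hD_kk : (v (⟨k, pk⟩ : Fin N), v ⟨k + 1, hk⟩) ∉ (insert e C).erase f ∧
      (v ⟨k + 1, hk⟩, v (⟨k, pk⟩ : Fin N)) ∉ (insert e C).erase f := by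
    constructor <;> intro hmem <;> obtain ⟨hne', hmem⟩ := Finset.mem_erase.mp hmem
    · rcases Finset.mem_insert.mp hmem with h | h
      · exact hpair_ne_e.1 h
      · rcases hf with hf1 | hf1
        · exact hne' hf1.symm
        · exact hnd _ _ h (hf1 ▸ hfC)
    · rcases Finset.mem_insert.mp hmem with h | h
      · exact hpair_ne_e.2 h
      · rcases hf with hf1 | hf1
        · exact hnd _ _ h (hf1 ▸ hfC)
        · exact hne' hf1.symm
  have hrevf : (f.2, f.1) ∉ insert e C := by
    intro hmem
    rcases Finset.mem_insert.mp hmem with h | h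
    · rcases hf with hf1 | hf1 <;> rw [hf1] at h
      · exact hpair_ne_e.2 h
      · exact hpair_ne_e.1 h
    · rcases hf with hf1 | hf1 <;> rw [hf1] at h hfC <;> exact hnd _ _ hfC h
  -- arithmetic on Fin addition
  have hval : ∀ a : Fin N, (a + (⟨k + 1, hk⟩ : Fin N)).val < N ∧
      ((a + (⟨k + 1, hk⟩ : Fin N)).val = a.val + (k + 1) ∨
        (a + (⟨k + 1, hk⟩ : Fin N)).val + N = a.val + (k + 1)) := by
    intro a
    refine ⟨(a + (⟨k + 1, hk⟩ : Fin N)).isLt, ?_⟩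
    have h : (a + (⟨k + 1, hk⟩ : Fin N)).val = (a.val + (k + 1)) % N := Fin.val_add a _
    have ha := a.isLt
    rcases Nat.lt_or_ge (a.val + (k + 1)) N with h' | h'
    · left; rw [h, Nat.mod_eq_of_lt h']
    · right; rw [h, Nat.mod_eq_sub_mod h', Nat.mod_eq_of_lt (by omega)]; omega
  -- the adjacency characterization of the final dichain
  have fwd : ∀ a b : Fin N,
      (v (a + ⟨k + 1, hk⟩), v (b + ⟨k + 1, hk⟩)) ∈ (insert e C).erase f →
      (a.val + 1 = b.val ∨ b.val + 1 = a.val) := by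
    intro a b hmem
    obtain ⟨hA1, hA2⟩ := hval a
    obtain ⟨hB1, hB2⟩ := hval b
    obtain ⟨A, hA⟩ : ∃ A, (a + (⟨k + 1, hk⟩ : Fin N)).val = A := ⟨_, rfl⟩
    obtain ⟨B, hB⟩ : ∃ B, (b + (⟨k + 1, hk⟩ : Fin N)).val = B := ⟨_, rfl⟩
    rw [hA] at hA1 hA2
    rw [hB] at hB1 hB2
    have ha := a.isLt
    have hb := b.isLt
    obtain ⟨hnef, hmem'⟩ := Finset.mem_erase.mp hmem
    rcases Finset.mem_insert.mp hmem' with h | h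
    · rcases he with he' | he' <;> rw [he'] at h <;>
      · injection h with h1' h2'
        have e1 := hm' h1'
        have e2 := hm' h2'
        rw [hA] at e1
        rw [hB] at e2
        omega
    · obtain ⟨s, hs, hss⟩ := hC' _ _ h
      rcases hss with ⟨h1', h2'⟩ | ⟨h1', h2'⟩
      · have e1 := hm' h1'
        have e2 := hm' h2'
        rw [hA] at e1
        rw [hB] at e2
        have hknot : ¬(A = k ∧ B = k + 1) := by
          rintro ⟨u1, u2⟩
          rw [show a + (⟨k + 1, hk⟩ : Fin N) = ⟨k, pk⟩ from Fin.ext (by rw [hA]; exact u1),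
            show b + (⟨k + 1, hk⟩ : Fin N) = ⟨k + 1, hk⟩ from
              Fin.ext (by rw [hB]; exact u2)] at hmem
          exact hD_kk.1 hmem
        omega
      · have e1 := hm' h1'
        have e2 := hm' h2'
        rw [hB] at e1
        rw [hA] at e2
        have hknot : ¬(A = k + 1 ∧ B = k) := by
          rintro ⟨u1, u2⟩
          rw [show a + (⟨k + 1, hk⟩ : Fin N) = ⟨k + 1, hk⟩ from
              Fin.ext (by rw [hA]; exact u1),
            show b + (⟨k + 1, hk⟩ : Fin N) = ⟨k, pk⟩ from
              Fin.ext (by rw [hB]; exact u2)] at hmem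
          exact hD_kk.2 hmem
        omega
  have bwd : ∀ a b : Fin N, a.val + 1 = b.val →
      (toGraph ((insert e C).erase f)).Adj (v (a + ⟨k + 1, hk⟩)) (v (b + ⟨k + 1, hk⟩)) := by
    intro a b hab
    obtain ⟨hA1, hA2⟩ := hval a
    obtain ⟨hB1, hB2⟩ := hval b
    have ha := a.isLt
    have hb := b.isLt
    have hne2 : v (a + ⟨k + 1, hk⟩) ≠ v (b + ⟨k + 1, hk⟩) := by
      intro h
      have h' : (a + (⟨k + 1, hk⟩ : Fin N)).val = (b + (⟨k + 1, hk⟩ : Fin N)).val :=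
        congrArg Fin.val (v.injective h)
      revert h' hA1 hA2 hB1 hB2
      generalize (a + (⟨k + 1, hk⟩ : Fin N)).val = A
      generalize (b + (⟨k + 1, hk⟩ : Fin N)).val = B
      omega
    have hcase : ((a + (⟨k + 1, hk⟩ : Fin N)).val + 1 = (b + (⟨k + 1, hk⟩ : Fin N)).val ∧
        (a + (⟨k + 1, hk⟩ : Fin N)).val ≠ k) ∨
        ((a + (⟨k + 1, hk⟩ : Fin N)).val = N - 1 ∧ (b + (⟨k + 1, hk⟩ : Fin N)).val = 0) := by
      revert hA1 hA2 hB1 hB2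
      generalize (a + (⟨k + 1, hk⟩ : Fin N)).val = A
      generalize (b + (⟨k + 1, hk⟩ : Fin N)).val = B
      omega
    rcases hcase with ⟨hAB, hAk⟩ | ⟨hAe, hBe⟩
    · have hs' : (a + (⟨k + 1, hk⟩ : Fin N)).val + 1 < N := by
        revert hAB hB1
        generalize (a + (⟨k + 1, hk⟩ : Fin N)).val = A
        generalize (b + (⟨k + 1, hk⟩ : Fin N)).val = B
        omega
      have hbm : (⟨(a + (⟨k + 1, hk⟩ : Fin N)).val + 1, hs'⟩ : Fin N) = b + ⟨k + 1, hk⟩ :=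
        Fin.ext hAB
      rcases hEx (a + (⟨k + 1, hk⟩ : Fin N)).val hs' with h | h
      · rw [hbm] at h
        refine ⟨hne2, Or.inl (Finset.mem_erase.mpr ⟨?_, Finset.mem_insert_of_mem h⟩)⟩
        intro hq
        rcases hf with hf1 | hf1 <;> rw [hf1] at hq <;>
        · injection hq with q1 q2
          have e1 := hm' q1
          have e2 := hm' q2
          revert e1 e2 hAB hAk
          generalize (a + (⟨k + 1, hk⟩ : Fin N)).val = A
          generalize (b + (⟨k + 1, hk⟩ : Fin N)).val = B
          omega
      · rw [hbm] at h
        refine ⟨hne2, Or.inr (Finset.mem_erase.mpr ⟨?_, Finset.mem_insert_of_mem h⟩)⟩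
        intro hq
        rcases hf with hf1 | hf1 <;> rw [hf1] at hq <;>
        · injection hq with q1 q2
          have e1 := hm' q1
          have e2 := hm' q2
          revert e1 e2 hAB hAk
          generalize (a + (⟨k + 1, hk⟩ : Fin N)).val = A
          generalize (b + (⟨k + 1, hk⟩ : Fin N)).val = B
          omega
    · rw [show a + (⟨k + 1, hk⟩ : Fin N) = ⟨N - 1, pN1⟩ from Fin.ext hAe,
        show b + (⟨k + 1, hk⟩ : Fin N) = ⟨0, p0⟩ from Fin.ext hBe]
      have hnee : v (⟨N - 1, pN1⟩ : Fin N) ≠ v ⟨0, p0⟩ := by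
        intro h; have := hm h; omega
      rcases he with he' | he'
      · exact ⟨hnee, Or.inl (Finset.mem_erase.mpr
          ⟨by rw [← he']; exact hef, by rw [← he']; exact Finset.mem_insert_self e C⟩)⟩
      · exact ⟨hnee, Or.inr (Finset.mem_erase.mpr
          ⟨by rw [← he']; exact hef, by rw [← he']; exact Finset.mem_insert_self e C⟩)⟩
  have hW : ∀ a b : Fin N,
      (toGraph ((insert e C).erase f)).Adj (v (a + ⟨k + 1, hk⟩)) (v (b + ⟨k + 1, hk⟩)) ↔
      (a.val + 1 = b.val ∨ b.val + 1 = a.val) := by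
    intro a b
    constructor
    · rintro ⟨hne', hor⟩
      rcases hor with h | h
      · exact fwd a b h
      · exact (fwd b a h).symm
    · rintro (h | h)
      · exact bwd a b h
      · exact (bwd b a h).symm
  -- reachability around the cycle avoiding f
  have hreach : (toGraph ((insert e C).erase f)).Reachable (v ⟨k + 1, hk⟩) (v ⟨k, pk⟩) := by
    have hadj : ∀ i, i < N - 1 → (toGraph ((insert e C).erase f)).Adj
        (v ((⟨i % N, Nat.mod_lt i p0⟩ : Fin N) + ⟨k + 1, hk⟩))
        (v ((⟨(i + 1) % N, Nat.mod_lt (i + 1) p0⟩ : Fin N) + ⟨k + 1, hk⟩)) := by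
      intro i hi
      apply (hW _ _).mpr
      left
      show i % N + 1 = (i + 1) % N
      rw [Nat.mod_eq_of_lt (by omega), Nat.mod_eq_of_lt (by omega)]
    have hch := chain_reach
      (fun i => v ((⟨i % N, Nat.mod_lt i p0⟩ : Fin N) + ⟨k + 1, hk⟩)) (N - 1) hadj
    have hch' : (toGraph ((insert e C).erase f)).Reachable
        (v ((⟨0 % N, Nat.mod_lt 0 p0⟩ : Fin N) + ⟨k + 1, hk⟩))
        (v ((⟨(N - 1) % N, Nat.mod_lt (N - 1) p0⟩ : Fin N) + ⟨k + 1, hk⟩)) := hch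
    have h0 : (⟨0 % N, Nat.mod_lt 0 p0⟩ : Fin N) + ⟨k + 1, hk⟩ = (⟨k + 1, hk⟩ : Fin N) := by
      apply Fin.ext
      rw [Fin.val_add]
      show (0 % N + (k + 1)) % N = k + 1
      rw [Nat.zero_mod, Nat.zero_add, Nat.mod_eq_of_lt hk]
    have hNm : (⟨(N - 1) % N, Nat.mod_lt (N - 1) p0⟩ : Fin N) + ⟨k + 1, hk⟩ =
        (⟨k, pk⟩ : Fin N) := by
      apply Fin.ext
      rw [Fin.val_add]
      show ((N - 1) % N + (k + 1)) % N = k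
      rw [Nat.mod_eq_of_lt pN1, show N - 1 + (k + 1) = N + k from by omega,
        Nat.add_mod_left, Nat.mod_eq_of_lt pk]
    rw [h0, hNm] at hch'
    exact hch'
  -- the deletion graph dominates the erased digraph's graph
  have hle : toGraph ((insert e C).erase f) ≤
      toGraph (insert e C) \ SimpleGraph.fromEdgeSet {s(f.1, f.2)} := by
    intro p q hpq
    obtain ⟨hne', hor⟩ := hpq
    constructor
    · refine ⟨hne', ?_⟩
      rcases hor with h | h
      exacts [Or.inl (Finset.mem_of_mem_erase h), Or.inr (Finset.mem_of_mem_erase h)]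
    · rw [SimpleGraph.fromEdgeSet_adj]
      rintro ⟨hE, -⟩
      rw [Set.mem_singleton_iff, Sym2.eq_iff] at hE
      rcases hor with h | h <;> rcases hE with ⟨rfl, rfl⟩ | ⟨rfl, rfl⟩
      · exact Finset.notMem_erase f _ h
      · exact hrevf (Finset.mem_of_mem_erase h)
      · exact hrevf (Finset.mem_of_mem_erase h)
      · exact Finset.notMem_erase f _ h
  have hbridge : ¬(toGraph (insert e C)).IsBridge s(f.1, f.2) := by
    intro hbr
    have hnr := (SimpleGraph.isBridge_iff).mp hbr
    apply hnr
    have h2 := hreach.mono hle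
    rcases hf with hf1 | hf1
    · have e1 : f.1 = v ⟨k, pk⟩ := by rw [hf1]
      have e2 : f.2 = v ⟨k + 1, hk⟩ := by rw [hf1]
      rw [e1, e2] at h2 ⊢
      exact h2.symm
    · have e1 : f.1 = v ⟨k + 1, hk⟩ := by rw [hf1]
      have e2 : f.2 = v ⟨k, pk⟩ := by rw [hf1]
      rw [e1, e2] at h2 ⊢
      exact h2
  -- assemble
  refine ⟨e, he, heNotC, heAcyc, f, hfC, hf, hbridge,
    dacyclic_mono (Finset.erase_subset f _) heAcyc, ?_⟩
  refine ⟨⟨fun x => v (x + ⟨k + 1, hk⟩), fun y => v.symm y - ⟨k + 1, hk⟩, ?_, ?_⟩, ?_, ?_⟩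
  · intro x
    simp
  · intro y
    simp
  · show v ((⟨0, p0⟩ : Fin N) + ⟨k + 1, hk⟩) = (⟨0, p0⟩ : Fin N)
    have h0 : (⟨0, p0⟩ : Fin N) + ⟨k + 1, hk⟩ = (⟨k + 1, hk⟩ : Fin N) := by
      apply Fin.ext
      rw [Fin.val_add]
      show (0 + (k + 1)) % N = k + 1
      rw [Nat.zero_add, Nat.mod_eq_of_lt hk]
    rw [h0]
    exact h1
  · intro a b
    exact hW a b
end
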